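/- Let G be a finite p-subgroup of GL_n(k), where k is an algebraically closed field of characteristic 0 and p > n. Then G is abelian and can be generated by at most n elements. -/

import Mathlib

open Polynomial Module Set Function

open scoped commutatorElement

section Helpers

variable {k : Type*} [Field k] {V : Type*} [AddCommGroup V] [Module k V]

private lemma maxGen_eq_eigen {f : Module.End k V} {m : ℕ} (hm : (m : k) ≠ 0)
    (hf : f ^ m = 1) (μ : k) : f.maxGenEigenspace μ = f.eigenspace μ := by
  have hsq : Squarefree (X ^ m - C (1 : k)) :=
    (Polynomial.separable_X_pow_sub_C 1 hm one_ne_zero).squarefree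
  have haev : aeval f (X ^ m - C (1 : k)) = 0 := by
    simp [map_sub, hf]
  exact (Module.End.isSemisimple_of_squarefree_aeval_eq_zero hsq
    haev).isFinitelySemisimple.maxGenEigenspace_eq_eigenspace μ

private lemma pow_apply_eigen {f : Module.End k V} {μ : k} {v : V}
    (hv : f v = μ • v) (j : ℕ) : (f ^ j) v = μ ^ j • v := by
  induction j with
  | zero => simp
  | succ j ih => rw [pow_succ, pow_succ, Module.End.mul_apply, hv, map_smul, ih, smul_smul,
      mul_comm]

private lemma eigenvalue_pow_eq_one {f : Module.End k V} {m : ℕ} (hf : f ^ m = 1) {μ : k}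
    (hb : f.eigenspace μ ≠ ⊥) : μ ^ m = 1 := by
  obtain ⟨v, hv, hv0⟩ := Submodule.exists_mem_ne_zero_of_ne_bot hb
  have hfv : f v = μ • v := Module.End.mem_eigenspace_iff.mp hv
  have h1 : (f ^ m) v = μ ^ m • v := pow_apply_eigen hfv m
  rw [hf] at h1
  have h2 : (μ ^ m - 1) • v = 0 := by
    rw [sub_smul, one_smul, ← h1]; simp
  rcases smul_eq_zero.mp h2 with h | h
  · exact sub_eq_zero.mp h
  · exact absurd h hv0

private lemma exists_ev_ne_one [IsAlgClosed k] [FiniteDimensional k V]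
    {f : Module.End k V} {m : ℕ} (hm : (m : k) ≠ 0)
    (hf : f ^ m = 1) (hne : f ≠ 1) :
    ∃ μ : k, μ ≠ 1 ∧ f.eigenspace μ ≠ ⊥ ∧ μ ^ m = 1 := by
  by_contra hcon
  push_neg at hcon
  apply hne
  have htop : ⨆ μ : k, f.maxGenEigenspace μ = ⊤ := Module.End.iSup_maxGenEigenspace_eq_top f
  have hle : ∀ μ : k, f.maxGenEigenspace μ ≤ LinearMap.ker (f - 1) := by
    intro μ
    rw [maxGen_eq_eigen hm hf]
    rcases eq_or_ne μ 1 with rfl | hμ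
    · intro x hx
      have := Module.End.mem_eigenspace_iff.mp hx
      simp [LinearMap.mem_ker, this]
    · by_cases hb : f.eigenspace μ = ⊥
      · rw [hb]; exact bot_le
      · exact absurd (eigenvalue_pow_eq_one hf hb) (hcon μ hμ hb)
  have hker : (⊤ : Submodule k V) ≤ LinearMap.ker (f - 1) := htop ▸ iSup_le hle
  ext v
  have : (f - 1) v = 0 := hker Submodule.mem_top
  simpa [sub_eq_zero] using this

private lemma mapsTo_eigen {fc g : Module.End k V} (h : Commute fc g) (μ : k) :
    MapsTo g (fc.eigenspace μ) (fc.eigenspace μ) :=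
  Module.End.mapsTo_genEigenspace_of_comm h μ 1

private lemma restrict_mul' {f g : Module.End k V} {W : Submodule k V}
    (hf : MapsTo f W W) (hg : MapsTo g W W) :
    ∀ (hfg : MapsTo (f * g) W W),
    (f * g).restrict hfg = f.restrict hf * g.restrict hg := fun _ => rfl

private lemma restrict_eq_of_eq {f g : Module.End k V} {W : Submodule k V}
    (hfg : f = g) (hf : MapsTo f W W) (hg : MapsTo g W W) :
    f.restrict hf = g.restrict hg := by subst hfg; rfl

private lemma mu_pow_finrank_eq_one [FiniteDimensional k V]
    {fc fg fg' fh fh' : Module.End k V} {μ : k}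
    (hgg' : fg * fg' = 1) (hhh' : fh * fh' = 1)
    (hcg : Commute fc fg) (hcg' : Commute fc fg')
    (hch : Commute fc fh) (hch' : Commute fc fh')
    (hrel : fg * fh * fg' = fc * fh) :
    μ ^ (Module.finrank k (fc.eigenspace μ)) = 1 := by
  set W := fc.eigenspace μ with hWdef
  have hg : MapsTo fg W W := mapsTo_eigen hcg μ
  have hg' : MapsTo fg' W W := mapsTo_eigen hcg' μ
  have hh : MapsTo fh W W := mapsTo_eigen hch μ
  have hh' : MapsTo fh' W W := mapsTo_eigen hch' μ
  have hc : MapsTo fc W W := mapsTo_eigen (Commute.refl fc) μ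
  have hgh : MapsTo (fg * fh) W W := fun x hx => hg (hh hx)
  have hghg' : MapsTo (fg * fh * fg') W W := fun x hx => hgh (hg' hx)
  have hch2 : MapsTo (fc * fh) W W := fun x hx => hc (hh hx)
  have hgg2 : MapsTo (fg * fg') W W := fun x hx => hg (hg' hx)
  have hhh2 : MapsTo (fh * fh') W W := fun x hx => hh (hh' hx)
  have hone : (1 : Module.End k V).restrict (fun x (hx : x ∈ W) => hx) = 1 := rfl
  have hcres : fc.restrict hc = (μ • 1 : Module.End k W) := by
    ext x
    have : fc (x : V) = μ • (x : V) := Module.End.mem_eigenspace_iff.mp x.2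
    simp [LinearMap.restrict_apply, this]
    exact this
  have hdet1 : LinearMap.det (fg.restrict hg) * LinearMap.det (fg'.restrict hg') = 1 := by
    rw [← map_mul, ← restrict_mul' hg hg' hgg2, restrict_eq_of_eq hgg' hgg2 (fun x hx => hx),
      hone, map_one]
  have hdet2 : LinearMap.det (fh.restrict hh) * LinearMap.det (fh'.restrict hh') = 1 := by
    rw [← map_mul, ← restrict_mul' hh hh' hhh2, restrict_eq_of_eq hhh' hhh2 (fun x hx => hx),
      hone, map_one]
  have hmain : LinearMap.det (fg.restrict hg) * LinearMap.det (fh.restrict hh) *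
      LinearMap.det (fg'.restrict hg') =
      μ ^ (Module.finrank k W) * LinearMap.det (fh.restrict hh) := by
    rw [← map_mul, ← map_mul, ← restrict_mul' hg hh hgh, ← restrict_mul' hgh hg' hghg',
      restrict_eq_of_eq hrel hghg' hch2, restrict_mul' hc hh hch2, map_mul, hcres]
    rw [LinearMap.det_smul, map_one, mul_one]
  have hhne : LinearMap.det (fh.restrict hh) ≠ 0 := by
    intro h0
    rw [h0, zero_mul] at hdet2
    exact zero_ne_one hdet2
  have h5 : μ ^ (Module.finrank k W) * LinearMap.det (fh.restrict hh) =
      1 * LinearMap.det (fh.restrict hh) := by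
    calc μ ^ (Module.finrank k W) * LinearMap.det (fh.restrict hh)
        = LinearMap.det (fg.restrict hg) * LinearMap.det (fh.restrict hh) *
          LinearMap.det (fg'.restrict hg') := hmain.symm
      _ = (LinearMap.det (fg.restrict hg) * LinearMap.det (fg'.restrict hg')) *
          LinearMap.det (fh.restrict hh) := by ring
      _ = 1 * LinearMap.det (fh.restrict hh) := by rw [hdet1]
  exact mul_right_cancel₀ hhne h5

private lemma exists_central_commutator {H : Type*} [Group H] (hnil : Group.IsNilpotent H)
    (hna : ¬ ∀ a b : H, a * b = b * a) :
    ∃ a b : H, ⁅a, b⁆ ≠ 1 ∧ ⁅a, b⁆ ∈ Subgroup.center H := by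
  classical
  set cl := Group.nilpotencyClass H with hcl
  have hcl2 : 2 ≤ cl := by
    by_contra hlt
    push_neg at hlt
    have hb : lowerCentralSeries (⊤ : Subgroup H) 1 = ⊥ :=
      lowerCentralSeries_eq_bot_iff_nilpotencyClass_le.mpr (by omega)
    apply hna
    intro a b
    have hcc : (⊤ : Subgroup H) ≤ Subgroup.centralizer ((⊤ : Subgroup H) : Set H) :=
      Subgroup.commutator_eq_bot_iff_le_centralizer.mp
        (by rw [show (⁅(⊤ : Subgroup H), ⊤⁆ : Subgroup H) = lowerCentralSeries (⊤ : Subgroup H) 1 from rfl]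
            exact hb)
    have := hcc (Subgroup.mem_top a)
    rw [Subgroup.mem_centralizer_iff] at this
    exact (this b (by simp)).symm
  have hlast_bot : lowerCentralSeries (⊤ : Subgroup H) cl = ⊥ := lowerCentralSeries_nilpotencyClass
  have hlast_ne : lowerCentralSeries (⊤ : Subgroup H) (cl - 1) ≠ ⊥ := by
    intro hb
    have := lowerCentralSeries_eq_bot_iff_nilpotencyClass_le.mp hb
    omega
  have hcentral : lowerCentralSeries (⊤ : Subgroup H) (cl - 1) ≤ Subgroup.center H := by
    have hsucc : lowerCentralSeries (⊤ : Subgroup H) cl = ⁅lowerCentralSeries (⊤ : Subgroup H) (cl - 1), (⊤ : Subgroup H)⁆ := by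
      rw [show cl = (cl - 1) + 1 by omega]
      rfl
    have := Subgroup.commutator_eq_bot_iff_le_centralizer.mp (hsucc ▸ hlast_bot)
    rwa [Subgroup.coe_top, Subgroup.centralizer_univ] at this
  have hform : lowerCentralSeries (⊤ : Subgroup H) (cl - 1) =
      Subgroup.closure { x | ∃ p ∈ lowerCentralSeries (⊤ : Subgroup H) (cl - 2), ∃ q ∈ (⊤ : Subgroup H),
        p * q * p⁻¹ * q⁻¹ = x } := by
    rw [show cl - 1 = (cl - 2) + 1 by omega]
    exact lowerCentralSeries_succ _ _
  obtain ⟨x, hxmem, hx1⟩ : ∃ x ∈ { x | ∃ p ∈ lowerCentralSeries (⊤ : Subgroup H) (cl - 2),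
      ∃ q ∈ (⊤ : Subgroup H), p * q * p⁻¹ * q⁻¹ = x }, x ≠ 1 := by
    by_contra hc
    push_neg at hc
    apply hlast_ne
    rw [hform, Subgroup.closure_eq_bot_iff]
    intro x hx
    simp [hc x hx]
  obtain ⟨a, _, b, _, hab⟩ := hxmem
  refine ⟨a, b, ?_, ?_⟩
  · rw [commutatorElement_def, hab]; exact hx1
  · apply hcentral
    rw [hform]
    apply Subgroup.subset_closure
    rw [commutatorElement_def, hab]
    exact ⟨a, ‹a ∈ _›, b, by simp, hab⟩

private lemma gen_lemma {k : Type*} [Field k] :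
    ∀ (m : ℕ) {H : Type*} [Group H] [Finite H] (f : H →* (Fin m → kˣ)),
      Injective f → ∃ S : Finset H, Subgroup.closure (S : Set H) = ⊤ ∧ S.card ≤ m := by
  intro m
  induction m with
  | zero =>
    intro H _ _ f hf
    haveI : Subsingleton H := hf.subsingleton
    refine ⟨∅, ?_, by simp⟩
    rw [eq_top_iff]
    intro x _
    rw [Subsingleton.elim x 1]
    exact Subgroup.one_mem _
  | succ m ih =>
    intro H _ _ f hf
    classical
    set ψ : H →* kˣ := (Pi.evalMonoidHom (fun _ : Fin (m + 1) => kˣ) (Fin.last m)).comp f with hψ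
    set K : Subgroup H := ψ.ker with hK
    let proj : (Fin (m + 1) → kˣ) →* (Fin m → kˣ) :=
      MonoidHom.mk' (fun v i => v i.castSucc) (fun a b => rfl)
    have hf' : Injective (proj.comp (f.comp K.subtype)) := by
      intro x y hxy
      have hx : f (x : H) (Fin.last m) = 1 := x.2
      have hy : f (y : H) (Fin.last m) = 1 := y.2
      have : f (x : H) = f (y : H) := by
        funext i
        induction i using Fin.lastCases with
        | last => rw [hx, hy]
        | cast i => exact congrFun hxy i
      exact Subtype.ext (hf this)
    obtain ⟨S₀, hS₀top, hS₀card⟩ := ih (proj.comp (f.comp K.subtype)) hf'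
    haveI : Finite ↥ψ.range := by
      have : ((ψ.range : Subgroup kˣ) : Set kˣ).Finite := by
        rw [MonoidHom.coe_range]; exact Set.finite_range ψ
      exact this.to_subtype
    obtain ⟨⟨z, hzmem⟩, hzgen⟩ := IsCyclic.exists_generator (α := ↥ψ.range)
    obtain ⟨h₀, hh₀⟩ := MonoidHom.mem_range.mp hzmem
    refine ⟨insert h₀ (S₀.image (fun a : ↥K => (a : H))), ?_, ?_⟩
    · rw [eq_top_iff]
      intro x _
      obtain ⟨j, hj⟩ := Subgroup.mem_zpowers_iff.mp (hzgen ⟨ψ x, ⟨x, rfl⟩⟩)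
      have hzj : z ^ j = ψ x := by
        have := congrArg (Subtype.val) hj
        simpa using this
      have hy : (h₀ ^ j)⁻¹ * x ∈ K := by
        rw [hK, MonoidHom.mem_ker, map_mul, map_inv, map_zpow, hh₀, hzj, inv_mul_cancel]
      have hyc : (h₀ ^ j)⁻¹ * x ∈ Subgroup.closure
          ((insert h₀ (S₀.image (fun a : ↥K => (a : H))) : Finset H) : Set H) := by
        have h1 : (⟨(h₀ ^ j)⁻¹ * x, hy⟩ : ↥K) ∈ Subgroup.closure (S₀ : Set ↥K) := by
          rw [hS₀top]; trivial
        have h2 : (h₀ ^ j)⁻¹ * x ∈ Subgroup.map K.subtype (Subgroup.closure (S₀ : Set ↥K)) :=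
          ⟨_, h1, rfl⟩
        rw [MonoidHom.map_closure] at h2
        refine Subgroup.closure_mono ?_ h2
        intro a ha
        obtain ⟨b, hb, rfl⟩ := ha
        simp only [Finset.coe_insert, Set.mem_insert_iff, Finset.coe_image, Set.mem_image]
        exact Or.inr ⟨b, hb, rfl⟩
      have hh₀mem : h₀ ∈ Subgroup.closure
          ((insert h₀ (S₀.image (fun a : ↥K => (a : H))) : Finset H) : Set H) :=
        Subgroup.subset_closure (by simp)
      have := mul_mem (Subgroup.zpow_mem _ hh₀mem j) hyc
      rwa [← mul_assoc, mul_inv_cancel, one_mul] at this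
    · calc (insert h₀ (S₀.image (fun a : ↥K => (a : H)))).card
          ≤ (S₀.image (fun a : ↥K => (a : H))).card + 1 := Finset.card_insert_le _ _
        _ ≤ S₀.card + 1 := by gcongr; exact Finset.card_image_le
        _ ≤ m + 1 := by omega

end Helpers

open scoped MatrixGroups

/-- Let `G` be a finite `p`-subgroup of `GL_n(k)`, `k` algebraically closed of characteristic
`0` and `p > n`. Then `G` is abelian and generated by at most `n` elements. -/
theorem stmt7 (p n : ℕ) (hp : p.Prime) (hpn : n < p)
    (k : Type*) [Field k] [IsAlgClosed k] [CharZero k]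
    (G : Subgroup (GL (Fin n) k)) [Finite G] (hG : IsPGroup p G) :
    (∀ a b : G, a * b = b * a) ∧
      ∃ S : Finset (GL (Fin n) k), (S : Set (GL (Fin n) k)) ⊆ (G : Set (GL (Fin n) k)) ∧
        Subgroup.closure (S : Set (GL (Fin n) k)) = G ∧ S.card ≤ n := by
  haveI : Fact p.Prime := ⟨hp⟩
  classical
  -- the action of `GL` on `V = Fin n → k` by linear endomorphisms
  set V : Type _ := (Fin n → k) with hV
  let L : GL (Fin n) k → Module.End k V := fun u => Matrix.toLinAlgEquiv' (u : Matrix (Fin n) (Fin n) k)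
  have hLmul : ∀ u v : GL (Fin n) k, L (u * v) = L u * L v := by
    intro u v
    simp only [L, Units.val_mul, map_mul]
  have hLone : L 1 = 1 := by simp [L]
  have hLinj : ∀ u v : GL (Fin n) k, L u = L v → u = v := by
    intro u v huv
    exact Units.ext (Matrix.toLinAlgEquiv'.injective huv)
  have hLinv : ∀ u : GL (Fin n) k, L u * L u⁻¹ = 1 := by
    intro u
    rw [← hLmul, mul_inv_cancel, hLone]
  have hLinv' : ∀ u : GL (Fin n) k, L u⁻¹ * L u = 1 := by
    intro u
    rw [← hLmul, inv_mul_cancel, hLone]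
  have hLpow : ∀ (u : GL (Fin n) k) (m : ℕ), u ^ m = 1 → L u ^ m = 1 := by
    intro u m hu
    have : ((u ^ m : GL (Fin n) k) : Matrix (Fin n) (Fin n) k) = 1 := by rw [hu]; rfl
    rw [Units.val_pow_eq_pow_val] at this
    calc L u ^ m = Matrix.toLinAlgEquiv' ((u : Matrix (Fin n) (Fin n) k) ^ m) := by
          rw [map_pow]
      _ = 1 := by rw [this, map_one]
  have hfinV : Module.finrank k V = n :=
    (Module.finrank_pi k).trans (Fintype.card_fin n)
  -- orders of elements
  have horder : ∀ x : ↥G, ∃ s : ℕ, (x : GL (Fin n) k) ^ p ^ s = 1 := by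
    intro x
    obtain ⟨s, hs⟩ := hG x
    refine ⟨s, ?_⟩
    have : ((x ^ p ^ s : ↥G) : GL (Fin n) k) = 1 := by rw [hs]; rfl
    rwa [SubgroupClass.coe_pow] at this
  -- Part 1: commutativity
  have habel : ∀ a b : ↥G, a * b = b * a := by
    by_contra hna
    have hnil : Group.IsNilpotent ↥G := hG.isNilpotent
    obtain ⟨a, b, hne, hcen⟩ := exists_central_commutator hnil hna
    set x : ↥G := ⁅a, b⁆ with hxdef
    obtain ⟨s, hs⟩ := horder x
    set m : ℕ := p ^ s with hm
    have hm0 : (m : k) ≠ 0 := Nat.cast_ne_zero.mpr (pow_pos hp.pos s).ne'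
    set g : GL (Fin n) k := (a : GL (Fin n) k) with hg
    set h : GL (Fin n) k := (b : GL (Fin n) k) with hh
    set c : GL (Fin n) k := (x : GL (Fin n) k) with hc
    have hcomm_rel : c * h = g * h * g⁻¹ := by
      have : (x : GL (Fin n) k) = g * h * g⁻¹ * h⁻¹ := by
        rw [hxdef]
        simp [commutatorElement_def, hg, hh]
      rw [hc, this]
      group
    have hcg : Commute c g := by
      have := Subgroup.mem_center_iff.mp hcen a
      have : (↑(a * x) : GL (Fin n) k) = ↑(x * a) := by rw [this]
      simpa [Subgroup.coe_mul, hc, hg, Commute, SemiconjBy] using this.symm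
    have hch : Commute c h := by
      have := Subgroup.mem_center_iff.mp hcen b
      have : (↑(b * x) : GL (Fin n) k) = ↑(x * b) := by rw [this]
      simpa [Subgroup.coe_mul, hc, hh, Commute, SemiconjBy] using this.symm
    have hcne : c ≠ 1 := by
      intro h1
      apply hne
      have : (x : GL (Fin n) k) = ((1 : ↥G) : GL (Fin n) k) := by rw [← hc, h1]; rfl
      exact Subtype.coe_injective this
    -- endomorphisms
    have hfcpow : L c ^ m = 1 := hLpow c m hs
    have hfcne : L c ≠ 1 := by
      intro h1
      exact hcne (hLinj c 1 (by rw [h1, hLone]))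
    obtain ⟨μ, hμ1, hμbot, hμm⟩ := exists_ev_ne_one hm0 hfcpow hfcne
    have hCg : Commute (L c) (L g) := by
      unfold Commute SemiconjBy
      rw [← hLmul, ← hLmul, hcg.eq]
    have hCg' : Commute (L c) (L g⁻¹) := by
      unfold Commute SemiconjBy
      rw [← hLmul, ← hLmul, (hcg.inv_right).eq]
    have hCh : Commute (L c) (L h) := by
      unfold Commute SemiconjBy
      rw [← hLmul, ← hLmul, hch.eq]
    have hCh' : Commute (L c) (L h⁻¹) := by
      unfold Commute SemiconjBy
      rw [← hLmul, ← hLmul, (hch.inv_right).eq]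
    have hrel : L g * L h * L g⁻¹ = L c * L h := by
      rw [← hLmul, ← hLmul, ← hLmul, hcomm_rel]
    have hkey : μ ^ (Module.finrank k ((L c).eigenspace μ)) = 1 :=
      mu_pow_finrank_eq_one (hLinv g) (hLinv h) hCg hCg' hCh hCh' hrel
    set d : ℕ := Module.finrank k ((L c).eigenspace μ) with hd
    have hd0 : d ≠ 0 := by
      intro h0
      exact hμbot (Submodule.finrank_eq_zero.mp h0)
    have hdn : d ≤ n := le_trans (Submodule.finrank_le _) (le_of_eq hfinV)
    -- order of μ
    have ho1 : orderOf μ ∣ m := orderOf_dvd_of_pow_eq_one hμm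
    obtain ⟨t, _, hμt⟩ := (Nat.dvd_prime_pow hp).mp (hm ▸ ho1)
    have ht0 : t ≠ 0 := by
      intro h0
      rw [h0, pow_zero] at hμt
      exact hμ1 (orderOf_eq_one_iff.mp hμt)
    have hpd : p ∣ d := by
      have h1 : orderOf μ ∣ d := orderOf_dvd_of_pow_eq_one hkey
      have h2 : p ∣ orderOf μ := hμt ▸ dvd_pow_self p ht0
      exact h2.trans h1
    have := Nat.le_of_dvd (Nat.pos_of_ne_zero hd0) hpd
    omega
  refine ⟨habel, ?_⟩
  -- Part 2: generation by at most n elements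
  set F : ↥G → Module.End k V := fun x => L (x : GL (Fin n) k) with hF
  have hFmul : ∀ x y : ↥G, F (x * y) = F x * F y := by
    intro x y
    rw [hF]
    simp only [Subgroup.coe_mul]
    exact hLmul _ _
  have hFcomm : ∀ x y : ↥G, Commute (F x) (F y) := by
    intro x y
    unfold Commute SemiconjBy
    rw [← hFmul, ← hFmul, habel]
  have hFpow : ∀ x : ↥G, ∃ s : ℕ, F x ^ p ^ s = 1 ∧ ((p ^ s : ℕ) : k) ≠ 0 := by
    intro x
    obtain ⟨s, hs⟩ := horder x
    exact ⟨s, hLpow _ _ hs, Nat.cast_ne_zero.mpr (pow_pos hp.pos s).ne'⟩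
  have hmx : ∀ (x : ↥G) (μ : k), (F x).maxGenEigenspace μ = (F x).eigenspace μ := by
    intro x μ
    obtain ⟨s, h1, h2⟩ := hFpow x
    exact maxGen_eq_eigen h2 h1 μ
  set W : (↥G → k) → Submodule k V := fun χ => ⨅ x : ↥G, (F x).maxGenEigenspace (χ x) with hWdef
  have hsim : ⨆ χ : ↥G → k, W χ = ⊤ := by
    apply Module.End.iSup_iInf_maxGenEigenspace_eq_top_of_iSup_maxGenEigenspace_eq_top_of_commute
    · intro i j _
      exact hFcomm i j
    · intro x
      exact Module.End.iSup_maxGenEigenspace_eq_top (F x)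
  have hind : iSupIndep W :=
    Module.End.independent_iInf_maxGenEigenspace_of_forall_mapsTo F
      (fun i j φ => Module.End.mapsTo_maxGenEigenspace_of_comm (hFcomm j i) φ)
  haveI hfin : Fintype {χ : ↥G → k // W χ ≠ ⊥} := hind.fintypeNeBotOfFiniteDimensional
  have hcard : Fintype.card {χ : ↥G → k // W χ ≠ ⊥} ≤ n :=
    le_trans hind.subtype_ne_bot_le_finrank (le_of_eq hfinV)
  have hscal : ∀ (χ : ↥G → k) (x : ↥G) (w : V), w ∈ W χ → F x w = χ x • w := by
    intro χ x w hw
    have hw1 : w ∈ (F x).maxGenEigenspace (χ x) := by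
      have hw' : w ∈ ⨅ y : ↥G, (F y).maxGenEigenspace (χ y) := hw
      exact (Submodule.mem_iInf _).mp hw' x
    rw [hmx] at hw1
    exact Module.End.mem_eigenspace_iff.mp hw1
  have hne0 : ∀ (χ : ↥G → k), W χ ≠ ⊥ → ∀ x : ↥G, χ x ≠ 0 := by
    intro χ hχ x h0
    obtain ⟨w, hw, hw0⟩ := Submodule.exists_mem_ne_zero_of_ne_bot hχ
    have h1 : F x w = 0 := by rw [hscal χ x w hw, h0, zero_smul]
    have h2 : L ((x : GL (Fin n) k)⁻¹) (F x w) = w := by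
      have h3 : L ((x : GL (Fin n) k)⁻¹) * F x = 1 := hLinv' _
      calc L ((x : GL (Fin n) k)⁻¹) (F x w) = (L ((x : GL (Fin n) k)⁻¹) * F x) w := rfl
        _ = w := by rw [h3]; rfl
    rw [h1, map_zero] at h2
    exact hw0 h2.symm
  -- the character homomorphism
  let Φ : ↥G →* ({χ : ↥G → k // W χ ≠ ⊥} → kˣ) :=
    MonoidHom.mk' (fun x => fun χ => Units.mk0 (χ.1 x) (hne0 χ.1 χ.2 x)) (by
      intro x y
      funext χ
      obtain ⟨w, hw, hw0⟩ := Submodule.exists_mem_ne_zero_of_ne_bot χ.2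
      apply Units.ext
      show χ.1 (x * y) = χ.1 x * χ.1 y
      have h1 : F (x * y) w = χ.1 (x * y) • w := hscal _ _ _ hw
      have h2 : F (x * y) w = (χ.1 x * χ.1 y) • w := by
        rw [hFmul, Module.End.mul_apply, hscal _ _ _ hw, map_smul, hscal _ _ _ hw,
          smul_smul, mul_comm]
      exact smul_left_injective k hw0 (h1.symm.trans h2))
  have hΦinj : Injective Φ := by
    rw [injective_iff_map_eq_one]
    intro x hx
    have hFx : F x = 1 := by
      have hle : ∀ χ : ↥G → k, W χ ≤ LinearMap.ker (F x - 1) := by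
        intro χ
        by_cases hb : W χ = ⊥
        · rw [hb]; exact bot_le
        · intro w hw
          have hχ1 : χ x = 1 := by
            have := congrFun hx ⟨χ, hb⟩
            exact congrArg Units.val this
          rw [LinearMap.mem_ker, LinearMap.sub_apply, hscal _ _ _ hw, hχ1, one_smul,
            Module.End.one_apply, sub_self]
      have hker : (⊤ : Submodule k V) ≤ LinearMap.ker (F x - 1) := hsim ▸ iSup_le hle
      refine LinearMap.ext fun v => ?_
      have : (F x - 1) v = 0 := hker Submodule.mem_top
      simpa [sub_eq_zero] using this
    have : (x : GL (Fin n) k) = 1 := hLinj _ _ (by rw [hLone]; exact hFx)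
    exact Subtype.coe_injective this
  -- transfer to Fin (card)
  set N : ℕ := Fintype.card {χ : ↥G → k // W χ ≠ ⊥} with hN
  let e := Fintype.equivFin {χ : ↥G → k // W χ ≠ ⊥}
  let reindex : ({χ : ↥G → k // W χ ≠ ⊥} → kˣ) →* (Fin N → kˣ) :=
    MonoidHom.mk' (fun v i => v (e.symm i)) (fun a b => rfl)
  have hreinj : Injective reindex := by
    intro v w hvw
    funext χ
    have h2 : v (e.symm (e χ)) = w (e.symm (e χ)) := congrFun hvw (e χ)
    simpa using h2
  obtain ⟨S₀, hS₀top, hS₀card⟩ := gen_lemma N (reindex.comp Φ) (hreinj.comp hΦinj)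
  refine ⟨S₀.image (fun a : ↥G => (a : GL (Fin n) k)), ?_, ?_, ?_⟩
  · intro y hy
    simp only [Finset.coe_image, Set.mem_image, Finset.mem_coe] at hy
    obtain ⟨a, _, rfl⟩ := hy
    exact a.2
  · have hco : ((S₀.image (fun a : ↥G => (a : GL (Fin n) k)) : Finset (GL (Fin n) k)) :
        Set (GL (Fin n) k)) = (G.subtype) '' (S₀ : Set ↥G) := by
      rw [Finset.coe_image]
      rfl
    rw [hco, ← MonoidHom.map_closure, hS₀top, ← MonoidHom.range_eq_map, Subgroup.range_subtype]
  · calc (S₀.image (fun a : ↥G => (a : GL (Fin n) k))).card ≤ S₀.card := Finset.card_image_le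
      _ ≤ N := hS₀card
      _ ≤ n := hcard
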